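/- (Damping separation and time rescaling) Let ε, α, ω, c_μ, c_δ be real with ε² + αc_μ > 0, set ε̄ = √(ε² + αc_μ), ω̄ = ω/ε̄ and δ̄ = αc_δ/ε̄². Let S = [[0,-1],[1,0]], I₂ the 2×2 identity, D(a,b) = diag(a-b, a+b). If z : ℝ → ℝ² is twice differentiable and satisfies z̈ + (2ωS + 2εI₂)ż + (2ωεS - ω²I₂)z - αD(c_μ,c_δ)z = 0 for all t, then the function q defined by q(s) = e^{(ε/ε̄)s} z(s/ε̄) is twice differentiable and satisfies q''(s) + 2ω̄ S q'(s) - ω̄² q(s) - D(1, δ̄) q(s) = 0 for all s. -/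

import Mathlib

open Matrix

/-- The rotation generator `S = [[0,-1],[1,0]]`. -/
def Smat : Matrix (Fin 2) (Fin 2) ℝ := !![0, -1; 1, 0]

/-- The saddle curvature matrix `D(a, b) = diag(a - b, a + b)`. -/
def Dmat (a b : ℝ) : Matrix (Fin 2) (Fin 2) ℝ := !![a - b, 0; 0, a + b]

/-- **Damping separation and time rescaling.**  If `z` solves the rotating-frame equation
`z̈ + (2ωS + 2εI)ż + (2ωεS - ω²I)z - αD(c_μ,c_δ)z = 0` and `ε² + αc_μ > 0`, then
`q(s) = e^{(ε/ε̄)s} z(s/ε̄)` (with `ε̄ = √(ε² + αc_μ)`) is twice differentiable and solves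
`q'' + 2ω̄Sq' - ω̄²q - D(1,δ̄)q = 0`, where `ω̄ = ω/ε̄` and `δ̄ = αc_δ/ε̄²`. -/
theorem stmt3 (ε α ω cμ cδ : ℝ) (hpos : 0 < ε ^ 2 + α * cμ)
    (εb : ℝ) (hεb : εb = Real.sqrt (ε ^ 2 + α * cμ))
    (ωb : ℝ) (hωb : ωb = ω / εb)
    (δb : ℝ) (hδb : δb = α * cδ / εb ^ 2)
    (z : ℝ → Fin 2 → ℝ)
    (hz : Differentiable ℝ z) (hz' : Differentiable ℝ (deriv z))
    (hode : ∀ t, deriv (deriv z) t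
        + ((2 * ω) • Smat + (2 * ε) • (1 : Matrix (Fin 2) (Fin 2) ℝ)).mulVec (deriv z t)
        + ((2 * ω * ε) • Smat - (ω ^ 2) • (1 : Matrix (Fin 2) (Fin 2) ℝ)).mulVec (z t)
        - α • (Dmat cμ cδ).mulVec (z t) = 0)
    (q : ℝ → Fin 2 → ℝ) (hq : q = fun s => Real.exp ((ε / εb) * s) • z (s / εb)) :
    Differentiable ℝ q ∧ Differentiable ℝ (deriv q) ∧
      ∀ s, deriv (deriv q) s + (2 * ωb) • Smat.mulVec (deriv q s)
        - (ωb ^ 2) • q s - (Dmat 1 δb).mulVec (q s) = 0 := by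
  have hεb0 : 0 < εb := by rw [hεb]; exact Real.sqrt_pos.mpr hpos
  have hεbne : εb ≠ 0 := ne_of_gt hεb0
  have hεbsq : εb ^ 2 = ε ^ 2 + α * cμ := by
    rw [hεb, sq, Real.mul_self_sqrt hpos.le]
  set c : ℝ := ε / εb with hc
  have hz1 : ∀ t, HasDerivAt z (deriv z t) t := fun t => (hz t).hasDerivAt
  have hz2 : ∀ t, HasDerivAt (deriv z) (deriv (deriv z) t) t := fun t => (hz' t).hasDerivAt
  have hinner : ∀ s : ℝ, HasDerivAt (fun s : ℝ => s / εb) εb⁻¹ s := by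
    intro s
    simpa [one_div] using (hasDerivAt_id s).div_const εb
  have he : ∀ s : ℝ, HasDerivAt (fun s => Real.exp (c * s)) (c * Real.exp (c * s)) s := by
    intro s
    have h := (Real.hasDerivAt_exp (c * s)).comp s ((hasDerivAt_id s).const_mul c)
    simp only [Function.comp_def] at h
    rw [show c * Real.exp (c * s) = Real.exp (c * s) * (c * 1) by ring]
    exact h
  have hzc : ∀ s : ℝ, HasDerivAt (fun s : ℝ => z (s / εb)) (εb⁻¹ • deriv z (s / εb)) s :=
    fun s => (hz1 (s / εb)).scomp s (hinner s)
  have hz1c : ∀ s : ℝ, HasDerivAt (fun s : ℝ => deriv z (s / εb))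
      (εb⁻¹ • deriv (deriv z) (s / εb)) s :=
    fun s => by simpa only [Function.comp_def] using (hz2 (s / εb)).scomp s (hinner s)
  set Q1 : ℝ → Fin 2 → ℝ := fun s =>
    Real.exp (c * s) • (εb⁻¹ • deriv z (s / εb)) + (c * Real.exp (c * s)) • z (s / εb) with hQ1
  have hq1 : ∀ s, HasDerivAt q (Q1 s) s := by
    intro s
    rw [hq]
    exact (he s).smul (hzc s)
  have hderivq : deriv q = Q1 := funext fun s => (hq1 s).deriv
  set Q2 : ℝ → Fin 2 → ℝ := fun s =>
    (Real.exp (c * s) • (εb⁻¹ • (εb⁻¹ • deriv (deriv z) (s / εb)))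
      + (c * Real.exp (c * s)) • (εb⁻¹ • deriv z (s / εb)))
    + ((c * Real.exp (c * s)) • (εb⁻¹ • deriv z (s / εb))
      + (c * (c * Real.exp (c * s))) • z (s / εb)) with hQ2
  have hq2 : ∀ s, HasDerivAt Q1 (Q2 s) s := by
    intro s
    exact ((he s).smul ((hz1c s).const_smul εb⁻¹)).add (((he s).const_mul c).smul (hzc s))
  have hderivq2 : deriv (deriv q) = Q2 := by
    rw [hderivq]; exact funext fun s => (hq2 s).deriv
  refine ⟨fun s => (hq1 s).differentiableAt, ?_, ?_⟩
  · rw [hderivq]; exact fun s => (hq2 s).differentiableAt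
  · intro s
    have hr : εb⁻¹ ^ 2 * (ε ^ 2 + α * cμ) = 1 := by
      rw [← hεbsq]; field_simp
    have h0 := congrFun (hode (s / εb)) 0
    have h1 := congrFun (hode (s / εb)) 1
    simp [Smat, Dmat, Matrix.of_apply, Matrix.mulVec, dotProduct, Fin.sum_univ_two,
      Matrix.smul_apply, Matrix.add_apply, Matrix.sub_apply, Matrix.one_apply,
      Matrix.cons_val', Matrix.cons_val_zero, Matrix.cons_val_one, Matrix.head_cons,
      Matrix.head_fin_const, Matrix.empty_val', Matrix.cons_val_fin_one,
      Pi.add_apply, Pi.sub_apply, Pi.smul_apply, Pi.zero_apply, smul_eq_mul,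
      if_true, if_false, Fin.isValue, one_ne_zero, zero_ne_one, ite_true, ite_false,
      mul_one, mul_zero, zero_mul, add_zero, zero_add, Matrix.vecHead, Matrix.vecTail] at h0 h1
    rw [hderivq2, hderivq, hq, hωb, hδb]
    funext i
    fin_cases i
    · simp [hQ2, hQ1, Smat, Dmat, Matrix.of_apply, Matrix.vecHead, Matrix.vecTail, Matrix.mulVec, dotProduct, Fin.sum_univ_two,
        Matrix.smul_apply, Matrix.add_apply, Matrix.sub_apply, Matrix.one_apply,
        Matrix.cons_val', Matrix.cons_val_zero, Matrix.cons_val_one, Matrix.head_cons,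
        Matrix.head_fin_const, Matrix.empty_val', Matrix.cons_val_fin_one,
        Pi.add_apply, Pi.sub_apply, Pi.smul_apply, Pi.zero_apply, smul_eq_mul]
      linear_combination (Real.exp (c * s) * εb⁻¹ ^ 2) * h0
        + (Real.exp (c * s) * z (s / εb) 0) * hr
    · simp [hQ2, hQ1, Smat, Dmat, Matrix.of_apply, Matrix.vecHead, Matrix.vecTail, Matrix.mulVec, dotProduct, Fin.sum_univ_two,
        Matrix.smul_apply, Matrix.add_apply, Matrix.sub_apply, Matrix.one_apply,
        Matrix.cons_val', Matrix.cons_val_zero, Matrix.cons_val_one, Matrix.head_cons,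
        Matrix.head_fin_const, Matrix.empty_val', Matrix.cons_val_fin_one,
        Pi.add_apply, Pi.sub_apply, Pi.smul_apply, Pi.zero_apply, smul_eq_mul]
      linear_combination (Real.exp (c * s) * εb⁻¹ ^ 2) * h1
        + (Real.exp (c * s) * z (s / εb) 1) * hr
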